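/- For k ≥ 4 and n ≥ 2, sg(G_{k,n}) = C(k,2)·(n−1) + k, where G_{k,n} is the graph obtained from K_k by replacing every edge with n internally disjoint paths of length 2 and then adding one universal vertex, and C(k,2) = k(k−1)/2. -/

import Mathlib

open SimpleGraph

/-- A choice of one fixed shortest path (geodesic) between each pair of vertices,
symmetric in the sense that the path from `v` to `u` is the reverse of the one
from `u` to `v`. -/
def StrongGeodeticChoice {V : Type*} (G : SimpleGraph V) (p : ∀ u v : V, G.Walk u v) : Prop :=
  ∀ u v : V, (p u v).IsPath ∧ (p u v).length = G.dist u v ∧ p v u = (p u v).reverse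

/-- `S` is a strong geodetic set of `G`: one can fix one shortest path between each
pair of vertices of `S` so that every vertex of `G` lies on some fixed path. -/
def IsStrongGeodeticSet {V : Type*} (G : SimpleGraph V) (S : Set V) : Prop :=
  ∃ p : ∀ u v : V, G.Walk u v, StrongGeodeticChoice G p ∧
    ∀ w : V, ∃ u ∈ S, ∃ v ∈ S, w ∈ (p u v).support

/-- The strong geodetic number of `G`. -/
noncomputable def sg {V : Type*} (G : SimpleGraph V) : ℕ :=
  sInf {n | ∃ S : Set V, S.ncard = n ∧ IsStrongGeodeticSet G S}

/-- The strong geodetic core number of `G`: the minimum, over minimum strong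
geodetic sets `S` together with a choice of fixed geodesics witnessing them,
of the size of a subset `X ⊆ S` such that the fixed paths with an endpoint in `X`
already cover all vertices. -/
noncomputable def sgc {V : Type*} (G : SimpleGraph V) : ℕ :=
  sInf {k | ∃ (S X : Set V) (p : ∀ u v : V, G.Walk u v),
    StrongGeodeticChoice G p ∧ S.ncard = sg G ∧
    (∀ w : V, ∃ u ∈ S, ∃ v ∈ S, w ∈ (p u v).support) ∧
    X ⊆ S ∧ X.ncard = k ∧
    (∀ w : V, ∃ u ∈ X, ∃ v ∈ S, w ∈ (p u v).support)}

/-- `A` is a geodetic set: every vertex lies on some shortest path between two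
vertices of `A`. -/
def IsGeodeticSet {V : Type*} (G : SimpleGraph V) (A : Set V) : Prop :=
  ∀ w : V, ∃ u ∈ A, ∃ v ∈ A, ∃ q : G.Walk u v, q.length = G.dist u v ∧ w ∈ q.support

/-- The geodetic number of `G`. -/
noncomputable def geodeticNumber {V : Type*} (G : SimpleGraph V) : ℕ :=
  sInf {n | ∃ A : Set V, A.ncard = n ∧ IsGeodeticSet G A}

/-- The graph `G_{k,n}`: obtained from `K_k` by replacing every edge with `n`
internally disjoint paths of length 2 and adding one universal vertex.
Vertices: the `k` original vertices, the subdivision vertices `x_{ij}^{(l)}`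
(indexed by an ordered pair `i < j` and `l ∈ Fin n`), and the universal vertex. -/
def Gkn (k n : ℕ) :
    SimpleGraph (Fin k ⊕ ({p : Fin k × Fin k // p.1 < p.2} × Fin n ⊕ Unit)) :=
  SimpleGraph.fromRel (fun a b =>
    match a, b with
    | Sum.inl i, Sum.inr (Sum.inl m) => i = m.1.1.1 ∨ i = m.1.1.2
    | _, Sum.inr (Sum.inr _) => True
    | _, _ => False)


section GknAux
open SimpleGraph Walk

variable {k n : ℕ}

abbrev Vkn (k n : ℕ) := Fin k ⊕ ({p : Fin k × Fin k // p.1 < p.2} × Fin n ⊕ Unit)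
abbrev Pk (k : ℕ) := {p : Fin k × Fin k // p.1 < p.2}
def uu {k n : ℕ} : Vkn k n := Sum.inr (Sum.inr ())

lemma adj_uu' {z : Vkn k n} (h : z ≠ uu) : (Gkn k n).Adj z uu := by
  rw [Gkn, fromRel_adj]
  exact ⟨h, Or.inl (by cases z <;> trivial)⟩

lemma not_adj_inl (i j : Fin k) : ¬ (Gkn k n).Adj (Sum.inl i) (Sum.inl j) := by
  rw [Gkn, fromRel_adj]
  rintro ⟨-, h | h⟩ <;> exact h

lemma adj_subdiv_iff (q : Pk k) (l : Fin n) (z : Vkn k n) :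
    (Gkn k n).Adj (Sum.inr (Sum.inl (q, l))) z ↔
      z = Sum.inl q.1.1 ∨ z = Sum.inl q.1.2 ∨ z = uu := by
  rw [Gkn, fromRel_adj]
  constructor
  · rintro ⟨hne, h | h⟩
    · rcases z with i | (m | u)
      · exact absurd h (by trivial)
      · exact absurd h (by trivial)
      · exact Or.inr (Or.inr rfl)
    · rcases z with i | (m | u)
      · rcases h with h | h
        · exact Or.inl (by rw [h])
        · exact Or.inr (Or.inl (by rw [h]))
      · exact absurd h (by trivial)
      · exact Or.inr (Or.inr rfl)
  · rintro (rfl | rfl | rfl)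
    · exact ⟨by simp, Or.inr (Or.inl rfl)⟩
    · exact ⟨by simp, Or.inr (Or.inr rfl)⟩
    · exact ⟨by simp [uu], Or.inl trivial⟩

lemma adj_inl_subdiv' (i : Fin k) (q : Pk k) (l : Fin n) (h : i = q.1.1 ∨ i = q.1.2) :
    (Gkn k n).Adj (Sum.inl i) (Sum.inr (Sum.inl (q, l))) := by
  rw [Gkn, fromRel_adj]
  exact ⟨by simp, Or.inl h⟩

lemma dist_le_two (u v : Vkn k n) : (Gkn k n).dist u v ≤ 2 := by
  by_cases huv : u = v
  · subst huv; simp [dist_self]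
  by_cases hu : u = uu
  · subst hu
    exact le_trans (dist_le (Walk.cons (adj_uu' (Ne.symm huv)).symm Walk.nil)) (by norm_num)
  by_cases hv : v = uu
  · subst hv; exact le_trans (dist_le (Walk.cons (adj_uu' hu) Walk.nil)) (by norm_num)
  · exact dist_le (Walk.cons (adj_uu' hu) (Walk.cons (adj_uu' hv).symm Walk.nil))

lemma dist_eq_two {u v : Vkn k n} (hne : u ≠ v) (hadj : ¬ (Gkn k n).Adj u v) :
    (Gkn k n).dist u v = 2 := by
  have h2 := dist_le_two u v
  have h0 : (Gkn k n).dist u v ≠ 0 := by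
    rw [dist_ne_zero_iff_ne_and_reachable]
    refine ⟨hne, ?_⟩
    by_cases hu : u = uu
    · subst hu; exact ((adj_uu' (Ne.symm hne)).reachable).symm
    by_cases hv : v = uu
    · exact hv ▸ (adj_uu' hu).reachable
    · exact ((adj_uu' hu).reachable).trans ((adj_uu' hv).reachable.symm)
  have h1 : (Gkn k n).dist u v ≠ 1 := fun h => hadj (dist_eq_one_iff_adj.mp h)
  omega

lemma reverse_cons2 {V : Type*} {G : SimpleGraph V} {a b m : V} (h1 : G.Adj a m) (h2 : G.Adj m b) :
    (Walk.cons h1 (Walk.cons h2 Walk.nil)).reverse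
      = Walk.cons h2.symm (Walk.cons h1.symm Walk.nil) := rfl

lemma cons2_congr {V : Type*} {G : SimpleGraph V} {a b m m' : V} (h : m = m') (h1 : G.Adj a m)
    (h2 : G.Adj m b) (h1' : G.Adj a m') (h2' : G.Adj m' b) :
    Walk.cons h1 (Walk.cons h2 Walk.nil) = Walk.cons h1' (Walk.cons h2' Walk.nil) := by
  subst h; rfl

lemma walk_structure {V : Type*} {G : SimpleGraph V} {u v w : V} (W : G.Walk u v)
    (hl : W.length ≤ 2) (hw : w ∈ W.support) (hu : w ≠ u) (hv : w ≠ v) :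
    ∃ (m : V) (h1 : G.Adj u m) (h2 : G.Adj m v),
      W = Walk.cons h1 (Walk.cons h2 Walk.nil) ∧ w = m := by
  match W with
  | Walk.nil => simp at hw; exact absurd hw hu
  | Walk.cons h Walk.nil =>
      simp at hw
      rcases hw with h' | h' <;> [exact absurd h' hu; exact absurd h' hv]
  | Walk.cons (v := m) h (Walk.cons h' Walk.nil) =>
      refine ⟨m, h, h', rfl, ?_⟩
      simp [Walk.support_cons] at hw
      rcases hw with h'' | h'' | h'' <;> [exact absurd h'' hu; exact h''; exact absurd h'' hv]
  | Walk.cons h (Walk.cons h' (Walk.cons h'' W')) => simp [Walk.length_cons] at hl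

def mid (hn : 0 < n) : Vkn k n → Vkn k n → Vkn k n := fun a b =>
  match a, b with
  | Sum.inl i, Sum.inl j =>
      if h : i < j then Sum.inr (Sum.inl (⟨(i,j), h⟩, ⟨0, hn⟩))
      else if h' : j < i then Sum.inr (Sum.inl (⟨(j,i), h'⟩, ⟨0, hn⟩))
      else uu
  | _, _ => uu

lemma mid_comm (hn : 0 < n) (a b : Vkn k n) : mid hn a b = mid hn b a := by
  rcases a with i | a <;> rcases b with j | b <;> try rfl
  simp only [mid]
  rcases lt_trichotomy i j with h | h | h
  · rw [dif_pos h, dif_neg (asymm h), dif_pos h]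
  · subst h; rw [dif_neg (lt_irrefl i), dif_neg (lt_irrefl i)]
  · rw [dif_neg (asymm h), dif_pos h, dif_pos h]

lemma mid_adj (hn : 0 < n) {a b : Vkn k n} (hne : a ≠ b) (hadj : ¬ (Gkn k n).Adj a b) :
    (Gkn k n).Adj a (mid hn a b) ∧ (Gkn k n).Adj (mid hn a b) b := by
  have hau : a ≠ uu := by rintro rfl; exact hadj ((adj_uu' (Ne.symm hne)).symm)
  have hbu : b ≠ uu := by rintro rfl; exact hadj (adj_uu' hne)
  rcases a with i | (m | x) <;> rcases b with j | (m' | x')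
  · have hij : i ≠ j := by rintro rfl; exact hne rfl
    simp only [mid]
    rcases lt_trichotomy i j with h | h | h
    · rw [dif_pos h]
      exact ⟨adj_inl_subdiv' i ⟨(i,j),h⟩ _ (Or.inl rfl),
        (adj_inl_subdiv' j ⟨(i,j),h⟩ _ (Or.inr rfl)).symm⟩
    · exact absurd h hij
    · rw [dif_neg (asymm h), dif_pos h]
      exact ⟨adj_inl_subdiv' i ⟨(j,i),h⟩ _ (Or.inr rfl),
        (adj_inl_subdiv' j ⟨(j,i),h⟩ _ (Or.inl rfl)).symm⟩
  all_goals first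
    | exact ⟨adj_uu' hau, (adj_uu' hbu).symm⟩
    | exact absurd rfl hau
    | exact absurd rfl hbu

open Classical in
noncomputable def pchoice (hn : 0 < n) (a b : Vkn k n) : (Gkn k n).Walk a b :=
  if h : a = b then h ▸ Walk.nil
  else if h2 : (Gkn k n).Adj a b then Walk.cons h2 Walk.nil
  else Walk.cons (mid_adj hn h h2).1 (Walk.cons (mid_adj hn h h2).2 Walk.nil)

end GknAux
section GknAux2
open SimpleGraph Walk
variable {k n : ℕ}

lemma pchoice_self (hn : 0 < n) (a : Vkn k n) : pchoice hn a a = Walk.nil := by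
  rw [pchoice, dif_pos rfl]

lemma pchoice_adj (hn : 0 < n) {a b : Vkn k n} (h : (Gkn k n).Adj a b) :
    pchoice hn a b = Walk.cons h Walk.nil := by
  rw [pchoice, dif_neg h.ne, dif_pos h]

lemma pchoice_nonadj (hn : 0 < n) {a b : Vkn k n} (hne : a ≠ b) (hadj : ¬ (Gkn k n).Adj a b) :
    pchoice hn a b = Walk.cons (mid_adj hn hne hadj).1 (Walk.cons (mid_adj hn hne hadj).2 Walk.nil) := by
  rw [pchoice, dif_neg hne, dif_neg hadj]

lemma pchoice_choice (hn : 0 < n) : StrongGeodeticChoice (Gkn k n) (pchoice hn) := by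
  intro a b
  by_cases h : a = b
  · subst h
    rw [pchoice_self]
    exact ⟨Walk.IsPath.nil, by simp [dist_self], rfl⟩
  by_cases h2 : (Gkn k n).Adj a b
  · rw [pchoice_adj hn h2, pchoice_adj hn h2.symm]
    exact ⟨by simp [h2.ne], by simp [(dist_eq_one_iff_adj.mpr h2)], rfl⟩
  · have hne' : b ≠ a := Ne.symm h
    have hadj' : ¬ (Gkn k n).Adj b a := fun h' => h2 h'.symm
    rw [pchoice_nonadj hn h h2, pchoice_nonadj hn hne' hadj']
    obtain ⟨ha1, ha2⟩ := mid_adj hn h h2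
    refine ⟨?_, ?_, ?_⟩
    · simp [Walk.isPath_def, ha1.ne, ha2.ne, h, Ne.symm ha1.ne, Ne.symm ha2.ne]
    · simp [dist_eq_two h h2]
    · rw [reverse_cons2]
      exact cons2_congr (mid_comm hn b a ▸ (mid_comm hn a b).symm) _ _ _ _

end GknAux2

section Counting
open Finset
lemma card_lt_pairs {k : ℕ} (A : Finset (Fin k)) :
    ((A ×ˢ A).filter fun p => p.1 < p.2).card = A.card.choose 2 := by
  classical
  set P := (A ×ˢ A).filter fun p => p.1 < p.2 with hP
  set P' := (A ×ˢ A).filter fun p => p.2 < p.1 with hP'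
  have hswap : P' = P.image Prod.swap := by
    ext p
    simp only [hP, hP', mem_filter, mem_image, mem_product]
    constructor
    · rintro ⟨⟨h1, h2⟩, h3⟩; exact ⟨p.swap, ⟨⟨h2, h1⟩, h3⟩, by simp⟩
    · rintro ⟨q, ⟨⟨h1, h2⟩, h3⟩, rfl⟩; exact ⟨⟨h2, h1⟩, h3⟩
  have hcard' : P'.card = P.card := by
    rw [hswap, card_image_of_injective _ Prod.swap_injective]
  have hdisj : Disjoint P P' := by
    rw [Finset.disjoint_left]
    intro p hp hp'
    simp only [hP, hP', mem_filter] at hp hp'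
    exact absurd hp'.2 (asymm hp.2)
  have hunion : P ∪ P' = A.offDiag := by
    ext p
    simp only [hP, hP', mem_union, mem_filter, mem_offDiag, mem_product]
    constructor
    · rintro (⟨⟨h1, h2⟩, h3⟩ | ⟨⟨h1, h2⟩, h3⟩) <;> exact ⟨h1, h2, by omega⟩
    · rintro ⟨h1, h2, h3⟩
      rcases lt_or_gt_of_ne h3 with h | h
      · exact Or.inl ⟨⟨h1, h2⟩, h⟩
      · exact Or.inr ⟨⟨h1, h2⟩, h⟩
  have := Finset.card_union_of_disjoint hdisj
  rw [hunion, offDiag_card] at this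
  have h2 : 2 * P.card = A.card * A.card - A.card := by omega
  have h3 : A.card * (A.card - 1) = A.card * A.card - A.card := by
    rw [Nat.mul_sub, Nat.mul_one]
  rw [Nat.choose_two_right]
  omega

lemma aux_choose (a k : ℕ) (hk : 3 ≤ k) (hak : a ≤ k) : k + a.choose 2 ≤ a + k.choose 2 := by
  induction k with
  | zero => omega
  | succ k ih =>
    have hck : (k+1).choose 2 = k + k.choose 2 := by
      rw [Nat.choose_succ_succ, Nat.choose_one_right]
    rcases Nat.lt_or_ge a (k+1) with h | h
    · by_cases h3 : 3 ≤ k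
      · have := ih h3 (by omega)
        omega
      · have hk2 : k = 2 := by omega
        subst hk2
        interval_cases a <;> simp [Nat.choose] <;> omega
    · have ha : a = k + 1 := by omega
      subst ha; omega

lemma card_Pk (k : ℕ) : Fintype.card (Pk k) = k.choose 2 := by
  classical
  rw [Fintype.card_subtype]
  have h := card_lt_pairs (Finset.univ : Finset (Fin k))
  rw [Finset.univ_product_univ] at h
  simpa using h
end Counting
section Cover
open SimpleGraph Walk
variable {k n : ℕ} {S : Set (Vkn k n)} {p : ∀ u v : Vkn k n, (Gkn k n).Walk u v}

lemma subdiv_cover (hch : StrongGeodeticChoice (Gkn k n) p)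
    (hcov : ∀ w : Vkn k n, ∃ u ∈ S, ∃ v ∈ S, w ∈ (p u v).support)
    (q : Pk k) (l : Fin n) (hS : Sum.inr (Sum.inl (q, l)) ∉ S) :
    Sum.inl q.1.1 ∈ S ∧ Sum.inl q.1.2 ∈ S ∧
      Sum.inr (Sum.inl (q, l)) ∈ (p (Sum.inl q.1.1) (Sum.inl q.1.2)).support := by
  set w : Vkn k n := Sum.inr (Sum.inl (q, l)) with hwdef
  obtain ⟨u, hu, v, hv, hw⟩ := hcov w
  have hwu : w ≠ u := fun h => hS (h ▸ hu)
  have hwv : w ≠ v := fun h => hS (h ▸ hv)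
  obtain ⟨hpath, hlen, -⟩ := hch u v
  have hle : (p u v).length ≤ 2 := hlen ▸ dist_le_two u v
  obtain ⟨m, h1, h2, hpuv, rfl⟩ := walk_structure (p u v) hle hw hwu hwv
  have hlen2 : (Gkn k n).dist u v = 2 := by rw [← hlen, hpuv]; rfl
  have huv : u ≠ v := by rintro rfl; simp [SimpleGraph.dist_self] at hlen2
  have hadj : ¬ (Gkn k n).Adj u v := fun h =>
    by rw [SimpleGraph.dist_eq_one_iff_adj.mpr h] at hlen2; omega
  have hu' := (adj_subdiv_iff q l u).mp h1.symm
  have hv' := (adj_subdiv_iff q l v).mp h2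
  rcases hu' with rfl | rfl | rfl <;> rcases hv' with rfl | rfl | rfl
  · exact absurd rfl huv
  · exact ⟨hu, hv, hw⟩
  · exact absurd (adj_uu' (by simp [uu])) hadj
  · refine ⟨hv, hu, ?_⟩
    rw [(hch (Sum.inl q.1.2) (Sum.inl q.1.1)).2.2, Walk.support_reverse,
      List.mem_reverse]
    exact hw
  · exact absurd rfl huv
  · exact absurd (adj_uu' (by simp [uu])) hadj
  · exact absurd (adj_uu' (by simp [uu])).symm hadj
  · exact absurd (adj_uu' (by simp [uu])).symm hadj
  · exact absurd rfl huv
lemma subdiv_unique (hch : StrongGeodeticChoice (Gkn k n) p)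
    (hcov : ∀ w : Vkn k n, ∃ u ∈ S, ∃ v ∈ S, w ∈ (p u v).support)
    (q : Pk k) {l l' : Fin n} (hS : Sum.inr (Sum.inl (q, l)) ∉ S)
    (hS' : Sum.inr (Sum.inl (q, l')) ∉ S) : l = l' := by
  obtain ⟨-, -, hw⟩ := subdiv_cover hch hcov q l hS
  obtain ⟨-, -, hw'⟩ := subdiv_cover hch hcov q l' hS'
  set W := p (Sum.inl q.1.1) (Sum.inl q.1.2) with hW
  have hle : W.length ≤ 2 := by
    rw [(hch _ _).2.1]; exact dist_le_two _ _
  obtain ⟨m, h1, h2, heq, hm⟩ := walk_structure W hle hw (by simp) (by simp)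
  obtain ⟨m', h1', h2', heq', hm'⟩ := walk_structure W hle hw' (by simp) (by simp)
  have : m = m' := by
    have := congrArg Walk.support (heq ▸ heq')
    simpa using this
  have : Sum.inr (Sum.inl (q, l)) = (Sum.inr (Sum.inl (q, l')) : Vkn k n) := by
    rw [hm, hm', this]
  simpa using this
end Cover
section Lower
open SimpleGraph Finset
variable {k n : ℕ}

lemma sg_lower (hk : 4 ≤ k) (hn : 2 ≤ n) (S : Set (Vkn k n))
    (h : IsStrongGeodeticSet (Gkn k n) S) :
    k.choose 2 * (n - 1) + k ≤ S.ncard := by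
  classical
  obtain ⟨p, hch, hcov⟩ := h
  set A : Finset (Fin k) := Finset.univ.filter (fun i => Sum.inl i ∈ S) with hA
  set B : Finset (Pk k × Fin n) :=
    Finset.univ.filter (fun m => Sum.inr (Sum.inl m) ∈ S) with hB
  set Lq : Pk k → Finset (Fin n) :=
    (fun q => Finset.univ.filter (fun l => Sum.inr (Sum.inl (q, l)) ∈ S)) with hLq
  set QA : Finset (Pk k) :=
    Finset.univ.filter (fun q => Sum.inl q.1.1 ∈ S ∧ Sum.inl q.1.2 ∈ S) with hQA
  -- step 1
  have step1 : A.card + B.card ≤ S.ncard := by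
    rw [Set.ncard_eq_toFinset_card' S]
    have hsub : A.image Sum.inl ∪ B.image (fun m => Sum.inr (Sum.inl m)) ⊆ S.toFinset := by
      intro x hx
      rw [Finset.mem_union] at hx
      rcases hx with hx | hx <;> rw [Finset.mem_image] at hx <;>
        obtain ⟨y, hy, rfl⟩ := hx <;> rw [Set.mem_toFinset] <;>
        simpa [hA, hB] using hy
    have hdisj : Disjoint (A.image Sum.inl)
        (B.image (fun m : Pk k × Fin n => (Sum.inr (Sum.inl m) : Vkn k n))) := by
      rw [Finset.disjoint_left]
      rintro x hx hx'
      rw [Finset.mem_image] at hx hx'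
      obtain ⟨y, -, rfl⟩ := hx
      obtain ⟨y', -, h'⟩ := hx'
      cases h'
    calc A.card + B.card
        = (A.image Sum.inl).card + (B.image (fun m => Sum.inr (Sum.inl m))).card := by
          rw [Finset.card_image_of_injective _ Sum.inl_injective,
            Finset.card_image_of_injective]
          intro a b hab
          simpa using hab
      _ = (A.image Sum.inl ∪ B.image (fun m => Sum.inr (Sum.inl m))).card :=
          (Finset.card_union_of_disjoint hdisj).symm
      _ ≤ S.toFinset.card := Finset.card_le_card hsub
  -- step 2
  have step2 : B.card = ∑ q : Pk k, (Lq q).card := by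
    rw [Finset.card_eq_sum_card_fiberwise
      (f := Prod.fst) (t := Finset.univ) (fun x _ => Finset.mem_univ _)]
    refine Finset.sum_congr rfl (fun q _ => ?_)
    have : B.filter (fun m => m.1 = q) = (Lq q).image (fun l => (q, l)) := by
      ext m
      simp only [hB, hLq, Finset.mem_filter, Finset.mem_image, Finset.mem_univ, true_and]
      constructor
      · rintro ⟨hm, rfl⟩
        exact ⟨m.2, hm, rfl⟩
      · rintro ⟨l, hl, rfl⟩
        exact ⟨hl, rfl⟩
    rw [this, Finset.card_image_of_injective]
    intro a b hab
    simpa using hab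
  -- step 3
  have step3 : ∀ q : Pk k, n ≤ (Lq q).card +
      (if Sum.inl q.1.1 ∈ S ∧ Sum.inl q.1.2 ∈ S then 1 else 0) := by
    intro q
    by_cases hfull : Lq q = Finset.univ
    · have : (Lq q).card = n := by rw [hfull]; simp
      omega
    · have hex : ∃ l, l ∉ Lq q := by
        by_contra hc
        push_neg at hc
        exact hfull (Finset.eq_univ_iff_forall.mpr hc)
      obtain ⟨l, hl⟩ := hex
      have hlS : Sum.inr (Sum.inl (q, l)) ∉ S := by
        intro hc
        exact hl (by simp [hLq, hc])
      obtain ⟨h1, h2, -⟩ := subdiv_cover hch hcov q l hlS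
      rw [if_pos ⟨h1, h2⟩]
      have hcompl : (Finset.univ \ Lq q).card ≤ 1 := by
        rw [Finset.card_le_one]
        intro a ha b hb
        rw [Finset.mem_sdiff] at ha hb
        have haS : Sum.inr (Sum.inl (q, a)) ∉ S := fun hc => ha.2 (by simp [hLq, hc])
        have hbS : Sum.inr (Sum.inl (q, b)) ∉ S := fun hc => hb.2 (by simp [hLq, hc])
        exact subdiv_unique hch hcov q haS hbS
      have := Finset.card_sdiff_add_card_eq_card (Finset.subset_univ (Lq q))
      have hu : (Finset.univ : Finset (Fin n)).card = n := by simp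
      omega
  -- step 4
  have step4 : k.choose 2 * n ≤ (∑ q : Pk k, (Lq q).card) + QA.card := by
    have hsum := Finset.sum_le_sum (fun q (_ : q ∈ Finset.univ) => step3 q)
    rw [Finset.sum_add_distrib] at hsum
    have hL : ∑ _q : Pk k, n = k.choose 2 * n := by
      rw [Finset.sum_const, smul_eq_mul, Finset.card_univ, card_Pk]
    have hR : (∑ q : Pk k, if Sum.inl q.1.1 ∈ S ∧ Sum.inl q.1.2 ∈ S then 1 else 0)
        = QA.card := by
      rw [hQA, Finset.card_filter]
    omega
  -- step 5
  have step5 : QA.card ≤ A.card.choose 2 := by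
    rw [← card_lt_pairs A]
    apply Finset.card_le_card_of_injOn (fun q => q.1)
    · intro q hq
      rw [hQA, Finset.mem_coe, Finset.mem_filter] at hq
      rw [Finset.mem_coe, Finset.mem_filter, Finset.mem_product]
      exact ⟨⟨by simp [hA, hq.2.1], by simp [hA, hq.2.2]⟩, q.2⟩
    · intro a _ b _ hab
      exact Subtype.ext hab
  have step6 : A.card ≤ k := by
    calc A.card ≤ (Finset.univ : Finset (Fin k)).card := Finset.card_le_card (Finset.subset_univ _)
    _ = k := by simp
  have step7 := aux_choose A.card k (by omega) step6
  have step8 : k.choose 2 * n = k.choose 2 * (n - 1) + k.choose 2 := by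
    conv_lhs => rw [show n = (n - 1) + 1 by omega]
    rw [Nat.mul_succ]
  generalize hP : k.choose 2 * n = P at step4 step8
  generalize hQ : k.choose 2 * (n - 1) = Q at step8 ⊢
  omega

end Lower
section Upper
open SimpleGraph Finset
variable {k n : ℕ}

def SS (k n : ℕ) : Set (Vkn k n) :=
  {v | match v with
    | Sum.inl _ => True
    | Sum.inr (Sum.inl m) => (m.2 : ℕ) ≠ 0
    | Sum.inr (Sum.inr _) => False}

lemma mem_SS_inl (i : Fin k) : (Sum.inl i : Vkn k n) ∈ SS k n := trivial

lemma mem_SS_subdiv {q : Pk k} {l : Fin n} (h : (l : ℕ) ≠ 0) :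
    (Sum.inr (Sum.inl (q, l)) : Vkn k n) ∈ SS k n := h

lemma SS_ncard (hn : 0 < n) : (SS k n).ncard = k.choose 2 * (n - 1) + k := by
  classical
  rw [Set.ncard_eq_toFinset_card' (SS k n)]
  have h1 : (SS k n).toFinset = (Finset.univ : Finset (Fin k)).image Sum.inl ∪
      ((Finset.univ : Finset (Pk k)) ×ˢ (Finset.univ.filter (fun l : Fin n => (l : ℕ) ≠ 0))).image
        (fun m => Sum.inr (Sum.inl m)) := by
    ext v
    rw [Set.mem_toFinset]
    rcases v with i | (⟨q, l⟩ | x) <;>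
      simp [SS, Finset.mem_union, Finset.mem_image, Finset.mem_product]
  rw [h1, Finset.card_union_of_disjoint, Finset.card_image_of_injective _ Sum.inl_injective,
    Finset.card_image_of_injective, Finset.card_product]
  · have hl : (Finset.univ.filter (fun l : Fin n => (l : ℕ) ≠ 0)).card = n - 1 := by
      have he : (Finset.univ.filter (fun l : Fin n => (l : ℕ) ≠ 0))
          = Finset.univ.erase (⟨0, hn⟩ : Fin n) := by
        ext l
        simp [Fin.ext_iff]
      rw [he, Finset.card_erase_of_mem (Finset.mem_univ _), Finset.card_univ, Fintype.card_fin]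
    rw [hl, Finset.card_univ, Finset.card_univ, card_Pk, Fintype.card_fin]
    exact Nat.add_comm _ _
  · intro a b hab; simpa using hab
  · rw [Finset.disjoint_left]
    rintro x hx hx'
    rw [Finset.mem_image] at hx hx'
    obtain ⟨y, -, rfl⟩ := hx
    obtain ⟨y', -, h'⟩ := hx'
    cases h'

lemma SS_strong (hk : 4 ≤ k) (hn : 2 ≤ n) : IsStrongGeodeticSet (Gkn k n) (SS k n) := by
  have hn0 : 0 < n := by omega
  refine ⟨pchoice hn0, pchoice_choice hn0, ?_⟩
  intro w
  rcases w with i | (⟨q, l⟩ | x)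
  · exact ⟨_, mem_SS_inl i, _, mem_SS_inl i, by simp [pchoice_self]⟩
  · by_cases hl : (l : ℕ) = 0
    · refine ⟨Sum.inl q.1.1, mem_SS_inl _, Sum.inl q.1.2, mem_SS_inl _, ?_⟩
      have hne : (Sum.inl q.1.1 : Vkn k n) ≠ Sum.inl q.1.2 := by
        simp only [ne_eq, Sum.inl.injEq]
        exact ne_of_lt q.2
      rw [pchoice_nonadj hn0 hne (not_adj_inl _ _)]
      have hmid : mid hn0 (Sum.inl q.1.1 : Vkn k n) (Sum.inl q.1.2)
          = Sum.inr (Sum.inl (q, l)) := by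
        simp only [mid]
        rw [dif_pos q.2]
        have h2 : (⟨0, hn0⟩ : Fin n) = l := Fin.ext (by simp [hl])
        rw [h2]
      simp only [Walk.support_cons, Walk.support_nil, List.mem_cons]
      exact Or.inr (Or.inl hmid.symm)
    · refine ⟨Sum.inr (Sum.inl (q, l)), mem_SS_subdiv hl, Sum.inr (Sum.inl (q, l)),
        mem_SS_subdiv hl, ?_⟩
      rw [pchoice_self]
      simp
  · cases x
    have h01 : ((⟨0, by omega⟩ : Fin k), (⟨1, by omega⟩ : Fin k)).1
        < ((⟨0, by omega⟩ : Fin k), (⟨1, by omega⟩ : Fin k)).2 := by simp [Fin.lt_def]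
    have h02 : ((⟨0, by omega⟩ : Fin k), (⟨2, by omega⟩ : Fin k)).1
        < ((⟨0, by omega⟩ : Fin k), (⟨2, by omega⟩ : Fin k)).2 := by simp [Fin.lt_def]
    set q1 : Pk k := ⟨_, h01⟩ with hq1
    set q2 : Pk k := ⟨_, h02⟩ with hq2
    set a : Vkn k n := Sum.inr (Sum.inl (q1, ⟨1, by omega⟩)) with ha
    set b : Vkn k n := Sum.inr (Sum.inl (q2, ⟨1, by omega⟩)) with hb
    refine ⟨a, mem_SS_subdiv (by simp), b, mem_SS_subdiv (by simp), ?_⟩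
    have hne : a ≠ b := by
      simp only [ha, hb, hq1, hq2, ne_eq, Sum.inr.injEq, Sum.inl.injEq, Prod.mk.injEq,
        Subtype.mk.injEq, Fin.mk.injEq]
      intro h
      omega
    have hadj : ¬ (Gkn k n).Adj a b := by
      intro h
      rcases (adj_subdiv_iff q1 _ b).mp h with h' | h' | h' <;> simp [hb, uu] at h'
    rw [pchoice_nonadj hn0 hne hadj]
    simp only [Walk.support_cons, Walk.support_nil, List.mem_cons]
    exact Or.inr (Or.inl rfl)

end Upper

theorem stmt17 (k n : ℕ) (hk : 4 ≤ k) (hn : 2 ≤ n) :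
    sg (Gkn k n) = k.choose 2 * (n - 1) + k := by
  have hn0 : 0 < n := by omega
  have hmem : (k.choose 2 * (n - 1) + k) ∈
      {m | ∃ S : Set (Vkn k n), S.ncard = m ∧ IsStrongGeodeticSet (Gkn k n) S} :=
    ⟨SS k n, SS_ncard hn0, SS_strong hk hn⟩
  apply le_antisymm
  · exact Nat.sInf_le hmem
  · refine le_csInf ⟨_, hmem⟩ (fun m hm => ?_)
    obtain ⟨S, hc, hs⟩ := hm
    exact hc ▸ sg_lower hk hn S hs
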